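/- Suppose (r+α)·(δ·t − δ·r − r·t·u₀) ≠ 0 and ρ := (s+α)(δt − δs − s·t·u₀) / ((r+α)(δt − δr − r·t·u₀)) > 0, and set d = (1/(r−s))·ln ρ. Then the threshold equation ψ₁(d)/ψ₁'(d) = 1/t + u₀/δ holds, where ψ₁(x) = (r+α)·e^{rx} − (s+α)·e^{sx}; explicitly, [(r+α)·e^{rd} − (s+α)·e^{sd}] / [r(r+α)·e^{rd} − s(s+α)·e^{sd}] = 1/t + u₀/δ. -/

import Mathlib

/-- With ρ = (s+α)(δt−δs−stu₀)/((r+α)(δt−δr−rtu₀)) > 0 and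
d = (1/(r−s))·ln ρ, the threshold equation ψ₁(d)/ψ₁'(d) = 1/t + u₀/δ holds, i.e.
[(r+α)e^{rd} − (s+α)e^{sd}]/[r(r+α)e^{rd} − s(s+α)e^{sd}] = 1/t + u₀/δ. -/
theorem stmt_7 (c lam del al u0 r s t d : ℝ) (hc : 0 < c) (hlam : 0 < lam)
    (hdel : 0 < del) (hal : 0 < al) (hu0 : 0 < u0) (hu0c : u0 < c)
    (hr : c * r ^ 2 - (lam + del - al * c) * r - al * del = 0)
    (hs : c * s ^ 2 - (lam + del - al * c) * s - al * del = 0)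
    (hs1 : -al < s) (hs2 : s < 0) (hr1 : 0 < r)
    (ht0 : t < 0)
    (htr : (c - u0) * t ^ 2 - (lam + del - al * (c - u0)) * t - al * del = 0)
    (hne : (r + al) * (del * t - del * r - r * t * u0) ≠ 0)
    (hρ : 0 < (s + al) * (del * t - del * s - s * t * u0)
        / ((r + al) * (del * t - del * r - r * t * u0)))
    (hd : d = (1 / (r - s)) * Real.log ((s + al) * (del * t - del * s - s * t * u0)
        / ((r + al) * (del * t - del * r - r * t * u0)))) :
    ((r + al) * Real.exp (r * d) - (s + al) * Real.exp (s * d))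
        / (r * (r + al) * Real.exp (r * d) - s * (s + al) * Real.exp (s * d))
      = 1 / t + u0 / del := by
  have hrs : r - s ≠ 0 := by nlinarith
  set A := (r + al) * (del * t - del * r - r * t * u0) with hA
  set B := (s + al) * (del * t - del * s - s * t * u0) with hB
  have hexp : Real.exp ((r - s) * d) = B / A := by
    rw [hd]
    rw [show (r - s) * (1 / (r - s) * Real.log (B / A)) = Real.log (B / A) by
      field_simp]
    exact Real.exp_log hρ
  have key : Real.exp (r * d) * A = Real.exp (s * d) * B := by
    have h1 : Real.exp (r * d) = Real.exp (s * d) * (B / A) := by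
      rw [← hexp, ← Real.exp_add]; ring_nf
    rw [h1]
    field_simp
  have hEr : 0 < Real.exp (r * d) := Real.exp_pos _
  have hEs : 0 < Real.exp (s * d) := Real.exp_pos _
  have hsal : 0 < s + al := by linarith
  have hral : 0 < r + al := by linarith
  have hY : 0 < r * (r + al) * Real.exp (r * d) - s * (s + al) * Real.exp (s * d) := by
    have h1 : 0 < r * (r + al) * Real.exp (r * d) := by positivity
    have h2 : 0 < (-s) * ((s + al) * Real.exp (s * d)) := by
      apply mul_pos (by linarith) (by positivity)
    nlinarith
  have htne : t ≠ 0 := ne_of_lt ht0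
  have hdne : del ≠ 0 := ne_of_gt hdel
  rw [div_eq_iff (ne_of_gt hY)]
  field_simp
  rw [mul_comm d s]
  linear_combination key
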